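/- Let Φ(t) = (t, t², ..., tⁿ) be the moment curve in ℝⁿ with n ≥ 2, and for 1 ≤ k ≤ n-1 and t ∈ [0,1] let V_k(t) = span(Φ'(t), Φ''(t), ..., Φ^{(k)}(t)). If V is a linear subspace of ℝⁿ with dim(V) ≤ n-1, and π_V denotes orthogonal projection of ℝⁿ onto V, then the set of t ∈ [0,1] for which there exists a nonzero vector v ∈ V orthogonal to π_V(V_k(t)) in the sense that dim(π_{V_k(t)}(V)) < min(dim V, k) is finite, with at most (n-1)! elements. -/

import Mathlib

set_option maxRecDepth 8000

open Polynomial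

private lemma coeff_prod_deg {ι : Type*} (s : Finset ι) (f : ι → ℝ[X]) (d : ι → ℕ)
    (h : ∀ i ∈ s, (f i).natDegree ≤ d i) :
    (∏ i ∈ s, f i).coeff (∑ i ∈ s, d i) = ∏ i ∈ s, (f i).coeff (d i) := by
  induction s using Finset.cons_induction with
  | empty => simp
  | cons a s ha ih =>
    rw [Finset.prod_cons, Finset.sum_cons, Finset.prod_cons,
      coeff_mul_add_eq_of_natDegree_le (h a (Finset.mem_cons_self a s))
        ((natDegree_prod_le _ _).trans (Finset.sum_le_sum
          fun i hi => h i (Finset.mem_cons_of_mem hi))),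
      ih fun i hi => h i (Finset.mem_cons_of_mem hi)]

private lemma hasDerivAt_euclidean (n : ℕ) (p : Fin n → ℝ[X]) (t : ℝ) :
    HasDerivAt (F := EuclideanSpace ℝ (Fin n)) (fun t : ℝ => WithLp.toLp 2 (fun j => (p j).eval t))
      (WithLp.toLp 2 (fun j => ((p j).derivative.eval t))) t := by
  have h1 : HasDerivAt (fun t : ℝ => (fun j => (p j).eval t : Fin n → ℝ))
      (fun j => ((p j).derivative.eval t)) t := hasDerivAt_pi.2 fun j => (p j).hasDerivAt t
  exact ((PiLp.continuousLinearEquiv 2 ℝ fun _ : Fin n => ℝ).symm.toContinuousLinearMap.hasFDerivAt.comp_hasDerivAt t h1 :)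

private lemma iteratedDeriv_euclidean (n : ℕ) (p : Fin n → ℝ[X]) (i : ℕ) :
    iteratedDeriv (F := EuclideanSpace ℝ (Fin n)) i (fun t : ℝ => WithLp.toLp 2 (fun j => (p j).eval t))
      = fun t => WithLp.toLp 2 (fun j => ((derivative^[i] (p j)).eval t)) := by
  induction i with
  | zero => simp
  | succ i ih =>
    rw [iteratedDeriv_succ, ih]
    funext t
    rw [(hasDerivAt_euclidean n (fun j => derivative^[i] (p j)) t).deriv]
    congr 1
    funext j
    rw [Function.iterate_succ_apply']

private lemma inner_iteratedDeriv_mc (n : ℕ) (w : EuclideanSpace ℝ (Fin n)) (i : ℕ) (t : ℝ) :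
    (inner ℝ w (iteratedDeriv (F := EuclideanSpace ℝ (Fin n)) i
        (fun t : ℝ => WithLp.toLp 2 (fun j : Fin n => t ^ (j.1 + 1))) t) : ℝ)
      = (derivative^[i] (∑ j : Fin n, C (w j) * X ^ (j.1 + 1))).eval t := by
  have hΦ : (fun t : ℝ => WithLp.toLp 2 (fun j : Fin n => t ^ (j.1 + 1)) : ℝ → EuclideanSpace ℝ (Fin n))
      = fun t => WithLp.toLp 2 (fun j : Fin n => (((X : ℝ[X]) ^ (j.1 + 1)).eval t)) := by
    funext t; simp
  rw [hΦ, iteratedDeriv_euclidean, iterate_derivative_sum]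
  simp only [iterate_derivative_C_mul, eval_finset_sum, eval_mul, eval_C]
  rw [PiLp.inner_apply]
  simp [RCLike.inner_apply, mul_comm]

private lemma fact_aux : ∀ n, 2 ≤ n → ∀ m, m ≤ n - 1 → m * (n - m) ≤ (n - 1).factorial := by
  intro n hn
  induction n, hn using Nat.le_induction with
  | base => intro m hm; interval_cases m <;> simp
  | succ n hn ih =>
    intro m hm
    by_cases h : m ≤ n - 1
    · have h1 := ih m h
      have h2 : m * (n + 1 - m) = m * (n - m) + m := by
        have hx : n + 1 - m = (n - m) + 1 := by omega
        rw [hx, Nat.mul_succ]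
      have h3 : m ≤ (n - 1).factorial := le_trans (by omega) (Nat.self_le_factorial _)
      have h4 : 2 * (n - 1).factorial ≤ n * (n - 1).factorial :=
        Nat.mul_le_mul_right _ (by omega)
      have h5 : n * (n - 1).factorial = n.factorial := by
        have := Nat.mul_factorial_pred (n := n) (by omega)
        simpa using this
      have : (n + 1 - 1).factorial = n.factorial := by simp
      omega
    · have hm' : m = n := by omega
      rw [hm']
      have hx : n + 1 - n = 1 := by omega
      rw [hx, mul_one]
      simpa using Nat.self_le_factorial n

private lemma strictMono_step {m : ℕ} (e : Fin m → ℕ) (he : StrictMono e) (a : Fin m) :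
    ∀ j (h : a.1 + j < m), e a + j ≤ e ⟨a.1 + j, h⟩ := by
  intro j
  induction j with
  | zero => intro h; simp
  | succ j ih =>
    intro h
    have h' : a.1 + j < m := by omega
    have hih := ih h'
    have := he (show (⟨a.1 + j, h'⟩ : Fin m) < ⟨a.1 + (j + 1), h⟩ by
      simp [Fin.lt_def])
    omega

private lemma strictMono_le_of_lt {m n : ℕ} (e : Fin m → ℕ) (he : StrictMono e)
    (hb : ∀ a, e a ≤ n) (a : Fin m) : e a + (m - 1 - a.1) ≤ n := by
  have h1 : a.1 + (m - 1 - a.1) < m := by omega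
  exact le_trans (strictMono_step e he a _ h1) (hb _)

private lemma strictMono_val_le {m : ℕ} (e : Fin m → ℕ) (he : StrictMono e) (a : Fin m) :
    a.1 ≤ e a := by
  have h0 : (0 : ℕ) + a.1 < m := by omega
  have h1 := strictMono_step e he ⟨0, lt_of_le_of_lt (Nat.zero_le _) a.2⟩ a.1 h0
  have h2 : (⟨(0 : ℕ) + a.1, h0⟩ : Fin m) = a := by ext; simp
  rw [h2] at h1
  omega

private lemma exists_polys_distinct_degrees (n m : ℕ) (W : Submodule ℝ ℝ[X])
    (hW : ∀ p ∈ W, p.natDegree ≤ n) (hm : m ≤ Module.finrank ℝ W) :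
    ∃ (e : Fin m → ℕ) (g : Fin m → ℝ[X]), StrictMono e ∧ (∀ a, e a ≤ n) ∧
      (∀ a, g a ∈ W) ∧ (∀ a, g a ≠ 0) ∧ (∀ a, (g a).natDegree = e a) := by
  classical
  set D : Finset ℕ :=
    (Finset.range (n + 1)).filter (fun d => ∃ p ∈ W, p ≠ 0 ∧ p.natDegree = d) with hD
  set h : ℕ → ℝ[X] := fun d =>
    if hd : ∃ p ∈ W, p ≠ 0 ∧ p.natDegree = d then hd.choose else 0 with hh
  have hprop : ∀ d ∈ D, h d ∈ W ∧ h d ≠ 0 ∧ (h d).natDegree = d := by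
    intro d hd
    rw [hD, Finset.mem_filter] at hd
    obtain ⟨-, hex⟩ := hd
    rw [hh]
    simp only [dif_pos hex]
    exact ⟨hex.choose_spec.1, hex.choose_spec.2.1, hex.choose_spec.2.2⟩
  -- every element of W lies in the span of (h '' D)
  have key : ∀ N (p : ℝ[X]), p ∈ W → p.natDegree ≤ N →
      p ∈ Submodule.span ℝ ((D.image h : Finset ℝ[X]) : Set ℝ[X]) := by
    intro N
    induction N using Nat.strong_induction_on with
    | _ N ih =>
      intro p hpW hpN
      by_cases hp0 : p = 0
      · rw [hp0]; exact Submodule.zero_mem _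
      · have hdD : p.natDegree ∈ D := by
          rw [hD, Finset.mem_filter, Finset.mem_range]
          exact ⟨Nat.lt_succ_of_le (hW p hpW), p, hpW, hp0, rfl⟩
        obtain ⟨hqW, hq0, hqdeg⟩ := hprop _ hdD
        set q := h p.natDegree with hq
        have hmemq : q ∈ Submodule.span ℝ ((D.image h : Finset ℝ[X]) : Set ℝ[X]) :=
          Submodule.subset_span (by
            simp only [Finset.coe_image, Set.mem_image, Finset.mem_coe]
            exact ⟨p.natDegree, hdD, rfl⟩)
        set c : ℝ := p.leadingCoeff / q.leadingCoeff with hc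
        have hc0 : c ≠ 0 :=
          div_ne_zero (leadingCoeff_ne_zero.2 hp0) (leadingCoeff_ne_zero.2 hq0)
        by_cases hpq : p - c • q = 0
        · have : p = c • q := by rwa [sub_eq_zero] at hpq
          rw [this]
          exact Submodule.smul_mem _ _ hmemq
        · have hdegq : (c • q).degree = p.degree := by
            rw [smul_eq_C_mul, degree_mul, degree_C hc0, zero_add,
              degree_eq_natDegree hq0, hqdeg, degree_eq_natDegree hp0]
          have hlead : (c • q).leadingCoeff = p.leadingCoeff := by
            rw [smul_eq_C_mul, leadingCoeff_mul, leadingCoeff_C, hc,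
              div_mul_cancel₀ _ (leadingCoeff_ne_zero.2 hq0)]
          have hdeg : (p - c • q).degree < p.degree :=
            degree_sub_lt hdegq.symm hp0 hlead.symm
          have hlt : (p - c • q).natDegree < p.natDegree :=
            natDegree_lt_natDegree hpq hdeg
          have hmem' : p - c • q ∈ W := Submodule.sub_mem _ hpW (Submodule.smul_mem _ _ hqW)
          have := ih (p - c • q).natDegree (lt_of_lt_of_le hlt hpN) _ hmem' le_rfl
          have hfinal : p = (p - c • q) + c • q := by ring
          rw [hfinal]
          exact Submodule.add_mem _ this (Submodule.smul_mem _ _ hmemq)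
  have hWle : W ≤ Submodule.span ℝ ((D.image h : Finset ℝ[X]) : Set ℝ[X]) :=
    fun p hp => key p.natDegree p hp le_rfl
  have hcard : Module.finrank ℝ W ≤ D.card := by
    have h1 : Module.finrank ℝ W ≤
        Module.finrank ℝ (Submodule.span ℝ ((D.image h : Finset ℝ[X]) : Set ℝ[X])) :=
      Submodule.finrank_mono hWle
    exact h1.trans ((finrank_span_finset_le_card _).trans (Finset.card_image_le))
  have hmD : m ≤ D.card := hm.trans hcard
  set e0 := D.orderEmbOfCardLe hmD with he0
  refine ⟨fun a => e0 a, fun a => h (e0 a), ?_, ?_, ?_, ?_, ?_⟩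
  · exact fun a b hab => e0.strictMono hab
  · intro a
    have h1 : e0 a ∈ Finset.range (n + 1) :=
      (Finset.mem_filter.1 (D.orderEmbOfCardLe_mem hmD a)).1
    have h2 := Finset.mem_range.1 h1
    show e0 a ≤ n
    omega
  · exact fun a => (hprop _ (D.orderEmbOfCardLe_mem hmD a)).1
  · exact fun a => (hprop _ (D.orderEmbOfCardLe_mem hmD a)).2.1
  · exact fun a => (hprop _ (D.orderEmbOfCardLe_mem hmD a)).2.2



/-- For the moment curve `Φ(t) = (t, t², …, tⁿ)` and
`V_k(t) = span(Φ'(t), …, Φ^{(k)}(t))`, and any linear subspace `V ⊆ ℝⁿ` with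
`dim V ≤ n-1`, the set of `t ∈ [0,1]` where the orthogonal projection of `V`
onto `V_k(t)` drops dimension below `min(dim V, k)` is finite, with at most
`(n-1)!` elements. -/
theorem moment_curve_projection_degeneracy_finite (n : ℕ) (hn : 2 ≤ n)
    (k : ℕ) (hk1 : 1 ≤ k) (hk2 : k ≤ n - 1)
    (V : Submodule ℝ (EuclideanSpace ℝ (Fin n)))
    (hV : Module.finrank ℝ V ≤ n - 1) :
    let Φ : ℝ → EuclideanSpace ℝ (Fin n) := fun t => WithLp.toLp 2 (fun j => t ^ (j.1 + 1))
    let Vk : ℝ → Submodule ℝ (EuclideanSpace ℝ (Fin n)) := fun t =>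
      Submodule.span ℝ (Set.range fun i : Fin k => iteratedDeriv (i.1 + 1) Φ t)
    let S : Set ℝ := {t ∈ Set.Icc (0:ℝ) 1 |
      Module.finrank ℝ (V.map (Submodule.orthogonalProjectionOnto (Vk t)).toLinearMap)
        < min (Module.finrank ℝ V) k}
    S.Finite ∧ S.ncard ≤ Nat.factorial (n - 1) := by
  
  classical
  intro Φ Vk S
  set d := Module.finrank ℝ V with hd
  set m := min d k with hm
  set qf : EuclideanSpace ℝ (Fin n) → ℝ[X] :=
    fun w => ∑ j : Fin n, C (w j) * X ^ (j.1 + 1) with hqf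
  have hqf_add : ∀ x y, qf (x + y) = qf x + qf y := by
    intro x y
    simp [hqf, PiLp.add_apply, C_add, add_mul, Finset.sum_add_distrib]
  have hqf_smul : ∀ (c : ℝ) x, qf (c • x) = c • qf x := by
    intro c x
    simp [hqf, PiLp.smul_apply, smul_eq_C_mul, C_mul, Finset.mul_sum, mul_assoc]
  set T : EuclideanSpace ℝ (Fin n) →ₗ[ℝ] ℝ[X] :=
    { toFun := fun w => derivative (qf w)
      map_add' := fun x y => by
        show derivative (qf (x + y)) = derivative (qf x) + derivative (qf y)
        rw [hqf_add, derivative_add]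
      map_smul' := fun c x => by
        show derivative (qf (c • x)) = (RingHom.id ℝ) c • derivative (qf x)
        rw [hqf_smul, derivative_smul]
        rfl } with hT
  have hTapply : ∀ w, T w = derivative (qf w) := fun w => rfl
  have hTcoeff : ∀ w (i : Fin n), (T w).coeff i.1 = (i.1 + 1) * w i := by
    intro w i
    rw [hTapply, hqf]
    rw [derivative_sum, finset_sum_coeff]
    have hzero : ∀ j ∈ Finset.univ, j ≠ i →
        (derivative (C (w j) * X ^ (j.1 + 1))).coeff i.1 = 0 := by
      intro j _ hji
      have hne : ¬ (i.1 = j.1) := fun h => hji (Fin.val_injective h).symm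
      rw [derivative_C_mul, derivative_X_pow, coeff_C_mul, coeff_C_mul, coeff_X_pow]
      simp [hne]
    rw [Finset.sum_eq_single_of_mem i (Finset.mem_univ i) hzero]
    rw [derivative_C_mul, derivative_X_pow, coeff_C_mul, coeff_C_mul, coeff_X_pow]
    simp only [Nat.add_sub_cancel, if_pos rfl, mul_one]
    push_cast
    ring
  have hTinj : Function.Injective T := by
    intro x y hxy
    have hsub : T (x - y) = 0 := by rw [map_sub, hxy, sub_self]
    have hxy0 : x - y = 0 := by
      ext i
      have h1 := hTcoeff (x - y) i
      rw [hsub] at h1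
      simp only [coeff_zero] at h1
      have h2 : ((i.1 : ℝ) + 1) ≠ 0 := by positivity
      have h3 : (0 : ℝ) = (↑i.1 + 1) * (x - y) i := by exact_mod_cast h1
      have := (mul_eq_zero.1 h3.symm).resolve_left h2
      exact this
    exact sub_eq_zero.mp hxy0
  set W := V.map T with hW
  have hWdeg : ∀ p ∈ W, p.natDegree ≤ n - 1 := by
    rintro p ⟨w, -, rfl⟩
    rw [hTapply]
    refine (natDegree_derivative_le _).trans (Nat.sub_le_sub_right ?_ 1)
    rw [hqf]
    refine natDegree_sum_le_of_forall_le _ _ fun j _ => ?_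
    refine (natDegree_C_mul_le _ _).trans ?_
    rw [natDegree_X_pow]
    exact j.2
  have hfinW : Module.finrank ℝ W = d := by
    rw [hW, hd]
    exact (LinearEquiv.finrank_eq (Submodule.equivMapOfInjective T hTinj V)).symm
  obtain ⟨e, g, hemono, hele, hgW, hg0, hgdeg⟩ :=
    exists_polys_distinct_degrees (n - 1) m W hWdeg
      (by rw [hfinW]; exact min_le_left _ _)
  choose v hvV hvT using fun a : Fin m => Submodule.mem_map.1 (hgW a)
  set M : Matrix (Fin m) (Fin m) ℝ[X] :=
    Matrix.of fun l a => derivative^[l.1] (g a) with hM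
  set P := M.det with hP
  set DD := ∑ a : Fin m, (e a - a.1) with hDD
  have hMentry : ∀ l a : Fin m, M l a = derivative^[l.1] (g a) := fun l a => rfl
  have hMdeg : ∀ (l a : Fin m), (M l a).natDegree ≤ e a - l.1 := by
    intro l a
    rw [hMentry]
    have := natDegree_iterate_derivative (g a) l.1
    rwa [hgdeg a] at this
  have hσsum : ∀ σ : Equiv.Perm (Fin m), (∀ a, (σ a).1 ≤ e a) →
      ∑ a : Fin m, (e a - (σ a).1) = DD := by
    intro σ hσ
    have h1 : ∑ a : Fin m, ((σ a).1) = ∑ a : Fin m, a.1 := Equiv.sum_comp σ Fin.val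
    have h2 : ∑ a : Fin m, (e a - (σ a).1) + ∑ a : Fin m, ((σ a).1)
        = ∑ a : Fin m, e a := by
      rw [← Finset.sum_add_distrib]
      exact Finset.sum_congr rfl fun a _ => Nat.sub_add_cancel (hσ a)
    have h3 : DD + ∑ a : Fin m, a.1 = ∑ a : Fin m, e a := by
      rw [hDD, ← Finset.sum_add_distrib]
      exact Finset.sum_congr rfl fun a _ =>
        Nat.sub_add_cancel (strictMono_val_le e hemono a)
    omega
  have hPdeg : P.natDegree ≤ DD := by
    rw [hP, Matrix.det_apply']
    refine natDegree_sum_le_of_forall_le _ _ fun σ _ => ?_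
    refine (natDegree_mul_le).trans ?_
    have hsign : (((Equiv.Perm.sign σ : ℤ) : ℝ[X])).natDegree = 0 := natDegree_intCast _
    rw [hsign, zero_add]
    by_cases hσ : ∀ a, (σ a).1 ≤ e a
    · refine le_trans (natDegree_prod_le _ _) ?_
      refine le_trans (Finset.sum_le_sum fun a _ => hMdeg (σ a) a) ?_
      exact le_of_eq (hσsum σ hσ)
    · push_neg at hσ
      obtain ⟨a0, ha0⟩ := hσ
      have hz : M (σ a0) a0 = 0 := by
        rw [hMentry]
        exact iterate_derivative_eq_zero (by rw [hgdeg a0]; exact ha0)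
      rw [Finset.prod_eq_zero (f := fun a => M (σ a) a) (Finset.mem_univ a0) hz]
      simp
  have hDDle : DD ≤ (n - 1).factorial := by
    have h1 : ∀ a : Fin m, e a - a.1 ≤ n - m := by
      intro a
      have h2 := strictMono_le_of_lt e hemono hele a
      have h3 := a.2
      omega
    calc DD ≤ ∑ _a : Fin m, (n - m) := Finset.sum_le_sum fun a _ => h1 a
      _ = m * (n - m) := by simp [Finset.sum_const, mul_comm]
      _ ≤ (n - 1).factorial := fact_aux n hn m (le_trans (min_le_right d k) hk2)
  have hcoeff : P.coeff DD ≠ 0 := by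
    set B : Matrix (Fin m) (Fin m) ℝ :=
      Matrix.of fun l a => ((e a).descFactorial l.1 : ℝ) with hB
    set L : ℝ := ∏ a : Fin m, (g a).leadingCoeff with hL
    have hBentry : ∀ l a : Fin m, B l a = ((e a).descFactorial l.1 : ℝ) := fun l a => rfl
    have hPB : P.coeff DD = B.det * L := by
      rw [hP, Matrix.det_apply', Matrix.det_apply', finset_sum_coeff, Finset.sum_mul]
      refine Finset.sum_congr rfl fun σ _ => ?_
      rw [← zsmul_eq_mul, ← zsmul_eq_mul, coeff_smul, smul_mul_assoc]
      congr 1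
      by_cases hσ : ∀ a, (σ a).1 ≤ e a
      · rw [show DD = ∑ a : Fin m, (e a - (σ a).1) from (hσsum σ hσ).symm]
        rw [coeff_prod_deg _ _ _ (fun a _ => hMdeg (σ a) a)]
        rw [hL, ← Finset.prod_mul_distrib]
        refine Finset.prod_congr rfl fun a _ => ?_
        rw [hMentry, coeff_iterate_derivative, Nat.sub_add_cancel (hσ a), nsmul_eq_mul,
          hBentry, ← hgdeg a, coeff_natDegree]
      · push_neg at hσ
        obtain ⟨a0, ha0⟩ := hσ
        have hz : M (σ a0) a0 = 0 := by
          rw [hMentry]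
          exact iterate_derivative_eq_zero (by rw [hgdeg a0]; exact ha0)
        have hz' : B (σ a0) a0 = 0 := by
          rw [hBentry, Nat.cast_eq_zero]
          exact Nat.descFactorial_eq_zero_iff_lt.2 ha0
        rw [Finset.prod_eq_zero (f := fun a => M (σ a) a) (Finset.mem_univ a0) hz,
          Finset.prod_eq_zero (f := fun a => B (σ a) a) (Finset.mem_univ a0) hz']
        simp
    have hvdm : B.det ≠ 0 := by
      have hBt : B.det =
          (Matrix.of fun (a l : Fin m) =>
            ((descPochhammer ℝ l.1).eval ((e a : ℝ)))).det := by
        rw [← Matrix.det_transpose B]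
        congr 1
        ext a l
        simp only [Matrix.transpose_apply, Matrix.of_apply, hBentry]
        exact (descPochhammer_eval_eq_descFactorial (R := ℝ) (e a) l.1).symm
      rw [hBt, ← Matrix.det_eval_matrixOfPolynomials_eq_det_vandermonde
        (fun a : Fin m => ((e a : ℝ))) (fun l => descPochhammer ℝ l.1)
        (fun l => descPochhammer_natDegree (R := ℝ) (n := l.1))
        (fun l => monic_descPochhammer (R := ℝ) (n := l.1))]
      refine Matrix.det_vandermonde_ne_zero_iff.2 fun a b hab => ?_
      exact hemono.injective (by exact_mod_cast hab)
    have hL0 : L ≠ 0 :=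
      Finset.prod_ne_zero_iff.2 fun a _ => leadingCoeff_ne_zero.2 (hg0 a)
    rw [hPB]
    exact mul_ne_zero hvdm hL0
  have hP0 : P ≠ 0 := fun h => hcoeff (by rw [h]; simp)
  have hSsub : S ⊆ {t : ℝ | P.eval t = 0} := by
    intro t ht
    obtain ⟨htI, hlt⟩ := ht
    by_contra hne
    set A : Matrix (Fin m) (Fin m) ℝ := M.map (Polynomial.evalRingHom t) with hA
    have hAdet : A.det ≠ 0 := by
      have h1 := (Polynomial.evalRingHom t).map_det M
      rw [RingHom.mapMatrix_apply] at h1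
      rw [hA, ← h1]
      simpa using hne
    have hAentry : ∀ l a : Fin m,
        A l a = (inner ℝ (v a) (iteratedDeriv (l.1 + 1) Φ t) : ℝ) := by
      intro l a
      have h1 : A l a = (derivative^[l.1] (g a)).eval t := rfl
      rw [h1, ← hvT a, hTapply, ← Function.iterate_succ_apply derivative l.1 (qf (v a))]
      rw [inner_iteratedDeriv_mc n (v a) (l.1 + 1) t]
    set πL := (Submodule.orthogonalProjectionOnto (Vk t)).toLinearMap with hπL
    set u : Fin m → ↥(V.map πL) := fun a =>
      ⟨πL (v a), Submodule.mem_map_of_mem (hvV a)⟩ with hu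
    have hli : LinearIndependent ℝ u := by
      rw [Fintype.linearIndependent_iff]
      intro c hc
      have hw0 : Submodule.orthogonalProjectionOnto (Vk t) (∑ a : Fin m, c a • v a) = 0 := by
        have h1 := congrArg (Submodule.subtype (V.map πL)) hc
        rw [map_sum] at h1
        simp only [map_smul, Submodule.subtype_apply, hu, map_zero] at h1
        rw [map_sum]
        simp only [map_smul]
        exact h1
      have hw' : (∑ a : Fin m, c a • v a) ∈ (Vk t)ᗮ :=
        Submodule.orthogonalProjectionOnto_eq_zero_iff.1 hw0
      have hvecmul : A.mulVec c = 0 := by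
        funext l
        have hmem : iteratedDeriv (l.1 + 1) Φ t ∈ Vk t :=
          Submodule.subset_span ⟨⟨l.1, lt_of_lt_of_le l.2 (min_le_right d k)⟩, rfl⟩
        have h0 : (inner ℝ (iteratedDeriv (l.1 + 1) Φ t) (∑ a : Fin m, c a • v a) : ℝ) = 0 :=
          (Submodule.mem_orthogonal _ _).1 hw' _ hmem
        rw [inner_sum] at h0
        simp only [real_inner_smul_right] at h0
        show ∑ a : Fin m, A l a * c a = 0
        rw [← h0]
        refine Finset.sum_congr rfl fun a _ => ?_
        rw [hAentry, real_inner_comm, mul_comm]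
      have hc0 := Matrix.eq_zero_of_mulVec_eq_zero hAdet hvecmul
      intro a0
      exact congrFun hc0 a0
    have hcard := hli.fintype_card_le_finrank
    rw [Fintype.card_fin] at hcard
    have : ¬ (Module.finrank ℝ (V.map πL) < min (Module.finrank ℝ V) k) := by
      rw [← hd, ← hm]
      omega
    exact this hlt
  have hfin : ({t : ℝ | P.eval t = 0}).Finite := Polynomial.finite_setOf_isRoot hP0
  constructor
  · exact hfin.subset hSsub
  · have h1 : S.ncard ≤ ({t : ℝ | P.eval t = 0}).ncard :=
      Set.ncard_le_ncard hSsub hfin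
    have h2 : ({t : ℝ | P.eval t = 0}) = (↑P.roots.toFinset : Set ℝ) := by
      ext x
      simp [Polynomial.mem_roots, hP0, Polynomial.IsRoot]
    rw [h2, Set.ncard_coe_finset] at h1
    have h3 := P.roots.toFinset_card_le
    have h4 := P.card_roots'
    omega
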